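/- Let n ≥ 1 and δ ∈ ℂ. If [-,-] is a Lie bracket on μ₀ⁿ making (μ₀ⁿ, ·, [-,-]) a δ-Poisson algebra, then [x, y] = 0 for all x, y ∈ μ₀ⁿ; that is, every δ-Poisson algebra structure on μ₀ⁿ is trivial. -/
import Mathlib


open Finset

/-- The null-filiform associative multiplication on `ℂⁿ = Fin n → ℂ`.
The basis vector `e_i` (1-based) corresponds to the coordinate `i - 1`, and
`e_i · e_j = e_{i+j}` if `i + j ≤ n`, and `0` otherwise. -/
noncomputable def nfMul (n : ℕ) (x y : Fin n → ℂ) : Fin n → ℂ :=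
  fun k => ∑ i : Fin n, ∑ j : Fin n,
    if (i : ℕ) + (j : ℕ) + 1 = (k : ℕ) then x i * y j else 0

/-- The 1-based basis vector `e i` of `ℂⁿ` (zero if `i` is out of range `1,…,n`). -/
noncomputable def nfE (n : ℕ) (i : ℕ) : Fin n → ℂ :=
  fun k => if (k : ℕ) + 1 = i then 1 else 0

/-- The coefficient of the basis vector `e i` (1-based) in `x`. -/
noncomputable def nfCoeff (n : ℕ) (x : Fin n → ℂ) (i : ℕ) : ℂ :=
  ∑ k : Fin n, if (k : ℕ) + 1 = i then x k else 0

/-- A Lie bracket (bilinear, alternating, satisfying the Jacobi identity)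
on a complex vector space. -/
structure LieBracketOn (L : Type*) [AddCommGroup L] [Module ℂ L] where
  br : L → L → L
  add_left : ∀ x y z, br (x + y) z = br x z + br y z
  smul_left : ∀ (c : ℂ) (x y : L), br (c • x) y = c • br x y
  add_right : ∀ x y z, br x (y + z) = br x y + br x z
  smul_right : ∀ (c : ℂ) (x y : L), br x (c • y) = c • br x y
  alt : ∀ x, br x x = 0
  jacobi : ∀ x y z, br (br x y) z + br (br y z) x + br (br z x) y = 0

/-- `(μ₀ⁿ, ·, [-,-])` is a transposed `δ`-Poisson algebra:
`δ • (z · [x,y]) = [z·x, y] + [x, z·y]`. -/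
noncomputable def IsTransposedPoisson (n : ℕ) (δ : ℂ) (B : LieBracketOn (Fin n → ℂ)) : Prop :=
  ∀ x y z, δ • nfMul n z (B.br x y) = B.br (nfMul n z x) y + B.br x (nfMul n z y)

/-- `(μ₀ⁿ, ·, [-,-])` is a `δ`-Poisson algebra:
`[x, y·z] = δ • ([x,y]·z + y·[x,z])`. -/
noncomputable def IsDeltaPoisson (n : ℕ) (δ : ℂ) (B : LieBracketOn (Fin n → ℂ)) : Prop :=
  ∀ x y z, B.br x (nfMul n y z) = δ • (nfMul n (B.br x y) z + nfMul n y (B.br x z))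

/-- The bracket of the transposed 0-Poisson algebra `TP₀(α₁,…,αₙ)` on `μ₀ⁿ`:
determined by `[e₁,e₂] = ∑_{t=1}^n αₜ eₜ` and `[eᵢ,eⱼ] = 0` for all other
pairs `i < j`. -/
noncomputable def brTP0 (n : ℕ) (α : ℕ → ℂ) (x y : Fin n → ℂ) : Fin n → ℂ :=
  (nfCoeff n x 1 * nfCoeff n y 2 - nfCoeff n x 2 * nfCoeff n y 1) •
    ∑ t ∈ Finset.Icc 1 n, α t • nfE n t

/-- The bracket of the transposed 1-Poisson algebra `TP₁(α₂,…,αₙ)` on `μ₀ⁿ`: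
determined by `[e₁,eᵢ] = ∑_{t=i}^n α_{t-i+2} eₜ` for `2 ≤ i ≤ n` and
`[eᵢ,eⱼ] = 0` for `2 ≤ i < j ≤ n`. -/
noncomputable def brTP1 (n : ℕ) (α : ℕ → ℂ) (x y : Fin n → ℂ) : Fin n → ℂ :=
  ∑ i ∈ Finset.Icc 2 n,
    (nfCoeff n x 1 * nfCoeff n y i - nfCoeff n x i * nfCoeff n y 1) •
      ∑ t ∈ Finset.Icc i n, α (t + 2 - i) • nfE n t

/-- The bracket of the transposed `δ`-Poisson algebra `TP_δ(a, b, c)`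
(`a = α_{n-2}`, `b = α_{n-1}`, `c = αₙ`) on `μ₀ⁿ`: determined by
`[e₁,e₂] = a e_{n-2} + b e_{n-1} + c eₙ`, `[e₁,e₃] = δ(a e_{n-1} + b eₙ)`,
`[e₂,e₃] = ((δ²-δ)/2) a eₙ`, `[e₁,e₄] = ((δ²+δ)/2) a eₙ`, and `[eᵢ,eⱼ] = 0`
for all other pairs `i < j`. -/
noncomputable def brTPd (n : ℕ) (δ a b c : ℂ) (x y : Fin n → ℂ) : Fin n → ℂ :=
  (nfCoeff n x 1 * nfCoeff n y 2 - nfCoeff n x 2 * nfCoeff n y 1) •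
      (a • nfE n (n-2) + b • nfE n (n-1) + c • nfE n n)
  + (nfCoeff n x 1 * nfCoeff n y 3 - nfCoeff n x 3 * nfCoeff n y 1) •
      (δ • (a • nfE n (n-1) + b • nfE n n))
  + (nfCoeff n x 2 * nfCoeff n y 3 - nfCoeff n x 3 * nfCoeff n y 2) •
      (((δ^2 - δ)/2 * a) • nfE n n)
  + (nfCoeff n x 1 * nfCoeff n y 4 - nfCoeff n x 4 * nfCoeff n y 1) •
      (((δ^2 + δ)/2 * a) • nfE n n)

/-- Two bracket structures on `μ₀ⁿ` are isomorphic (as transposed δ-Poisson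
algebras): there is a linear bijection preserving both `·` and `[-,-]`. -/
noncomputable def TPIso (n : ℕ) (B B' : (Fin n → ℂ) → (Fin n → ℂ) → (Fin n → ℂ)) : Prop :=
  ∃ φ : (Fin n → ℂ) ≃ₗ[ℂ] (Fin n → ℂ),
    (∀ x y, φ (nfMul n x y) = nfMul n (φ x) (φ y)) ∧
    ∀ x y, φ (B x y) = B' (φ x) (φ y)


section Aux

lemma nf_mul_e (n a b : ℕ) (ha : 1 ≤ a) (hb : 1 ≤ b) :
    nfMul n (nfE n a) (nfE n b) = nfE n (a+b) := by
  funext k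
  have hk := k.isLt
  simp only [nfMul, nfE, mul_ite, ite_mul, one_mul, mul_one, zero_mul, mul_zero]
  rw [Finset.sum_comm]
  rcases Nat.lt_or_ge (b-1) n with hbn | hbn
  · rw [Finset.sum_eq_single (⟨b-1, hbn⟩ : Fin n)]
    · rcases Nat.lt_or_ge (a-1) n with han | han
      · rw [Finset.sum_eq_single (⟨a-1, han⟩ : Fin n)]
        · simp only [Fin.val_mk]
          split_ifs <;> first | rfl | omega
        · intro i _ hi
          have : (i:ℕ) + 1 ≠ a := by
            intro h; apply hi; apply Fin.ext; simp; omega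
          simp [this]
        · simp
      · have h1 : ∀ i : Fin n, (i:ℕ) + 1 ≠ a := by intro i; have := i.isLt; omega
        have h2 : (k:ℕ) + 1 ≠ a + b := by omega
        simp [h1, h2]
    · intro j _ hj
      have : (j:ℕ) + 1 ≠ b := by intro h; apply hj; apply Fin.ext; simp; omega
      simp [this]
    · simp
  · have h1 : ∀ j : Fin n, (j:ℕ) + 1 ≠ b := by intro j; have := j.isLt; omega
    have h2 : (k:ℕ) + 1 ≠ a + b := by omega
    simp [h1, h2]

lemma nf_mul_zero_left (n : ℕ) (y : Fin n → ℂ) : nfMul n 0 y = 0 := by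
  funext k; simp [nfMul]

lemma nf_mul_zero_right (n : ℕ) (x : Fin n → ℂ) : nfMul n x 0 = 0 := by
  funext k; simp [nfMul]

lemma nf_e_zero (n : ℕ) : nfE n 0 = 0 := by
  funext k; simp [nfE]

lemma nf_eq_sum_e (n : ℕ) (x : Fin n → ℂ) :
    x = ∑ k : Fin n, x k • nfE n ((k:ℕ)+1) := by
  funext m
  simp only [nfE, Finset.sum_apply, Pi.smul_apply, smul_eq_mul, mul_ite, mul_one, mul_zero]
  rw [Finset.sum_eq_single m] <;> simp +contextual [Fin.ext_iff, eq_comm]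

variable {n : ℕ} (B : LieBracketOn (Fin n → ℂ))

/-- Bracket with fixed right argument, as a linear map. -/
noncomputable def brL (y : Fin n → ℂ) : (Fin n → ℂ) →ₗ[ℂ] (Fin n → ℂ) where
  toFun x := B.br x y
  map_add' a b := B.add_left a b y
  map_smul' c x := B.smul_left c x y

/-- Bracket with fixed left argument, as a linear map. -/
noncomputable def brR (x : Fin n → ℂ) : (Fin n → ℂ) →ₗ[ℂ] (Fin n → ℂ) where
  toFun y := B.br x y
  map_add' a b := B.add_right x a b
  map_smul' c y := B.smul_right c x y

@[simp] lemma brL_apply (x y : Fin n → ℂ) : brL B y x = B.br x y := rfl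
@[simp] lemma brR_apply (x y : Fin n → ℂ) : brR B x y = B.br x y := rfl

lemma br_zero_left (y : Fin n → ℂ) : B.br 0 y = 0 := (brL B y).map_zero

lemma br_zero_right (x : Fin n → ℂ) : B.br x 0 = 0 := (brR B x).map_zero

lemma br_antisymm (x y : Fin n → ℂ) : B.br x y = - B.br y x := by
  have h := B.alt (x + y)
  rw [B.add_left, B.add_right, B.add_right, B.alt, B.alt] at h
  have h2 : B.br x y + B.br y x = 0 := by
    rw [zero_add, add_zero] at h; exact h
  exact eq_neg_of_add_eq_zero_left h2

lemma br_e1_e (δ : ℂ) (hB : IsDeltaPoisson n δ B) :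
    ∀ k : ℕ, B.br (nfE n 1) (nfE n k) = 0 := by
  intro k
  induction k using Nat.strong_induction_on with
  | _ k ih =>
    match k, ih with
    | 0, _ => rw [nf_e_zero]; exact br_zero_right B _
    | 1, _ => exact B.alt _
    | (m+2), ih =>
      have he : nfE n (m+2) = nfMul n (nfE n (m+1)) (nfE n 1) := by
        rw [nf_mul_e n (m+1) 1 (by omega) le_rfl]
      rw [he, hB, ih (m+1) (by omega), B.alt, nf_mul_zero_left, nf_mul_zero_right,
        add_zero, smul_zero]

lemma br_e_e (δ : ℂ) (hB : IsDeltaPoisson n δ B) :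
    ∀ i k : ℕ, B.br (nfE n i) (nfE n k) = 0 := by
  intro i k
  induction k using Nat.strong_induction_on with
  | _ k ih =>
    match k, ih with
    | 0, _ => rw [nf_e_zero]; exact br_zero_right B _
    | 1, _ => rw [br_antisymm, br_e1_e B δ hB i, neg_zero]
    | (m+2), ih =>
      have he : nfE n (m+2) = nfMul n (nfE n (m+1)) (nfE n 1) := by
        rw [nf_mul_e n (m+1) 1 (by omega) le_rfl]
      rw [he, hB, ih (m+1) (by omega), ih 1 (by omega), nf_mul_zero_left,
        nf_mul_zero_right, add_zero, smul_zero]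

end Aux
/-- for `n ≥ 1` and any `δ ∈ ℂ`, every `δ`-Poisson algebra
structure on `μ₀ⁿ` is trivial: `[x,y] = 0` for all `x, y`. -/
theorem stmt_19 (n : ℕ) (hn : 1 ≤ n) (δ : ℂ)
    (B : LieBracketOn (Fin n → ℂ)) (hB : IsDeltaPoisson n δ B) :
    ∀ x y, B.br x y = 0 := by
  intro x y
  have hx : B.br x y = B.br (∑ k : Fin n, x k • nfE n ((k:ℕ)+1)) y := by
    rw [← nf_eq_sum_e]
  rw [hx, show B.br (∑ k : Fin n, x k • nfE n ((k:ℕ)+1)) y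
      = brL B y (∑ k : Fin n, x k • nfE n ((k:ℕ)+1)) from rfl, map_sum]
  refine Finset.sum_eq_zero fun k _ => ?_
  rw [map_smul, brL_apply]
  have hy : B.br (nfE n ((k:ℕ)+1)) y
      = B.br (nfE n ((k:ℕ)+1)) (∑ m : Fin n, y m • nfE n ((m:ℕ)+1)) := by
    rw [← nf_eq_sum_e]
  rw [hy, show B.br (nfE n ((k:ℕ)+1)) (∑ m : Fin n, y m • nfE n ((m:ℕ)+1))
      = brR B (nfE n ((k:ℕ)+1)) (∑ m : Fin n, y m • nfE n ((m:ℕ)+1)) from rfl, map_sum]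
  rw [Finset.sum_eq_zero, smul_zero]
  intro m _
  rw [map_smul, brR_apply, br_e_e B δ hB, smul_zero]
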